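/- For every positive integer r, sum_{n=1}^infty h_n^(r) / (n(n+1)...(n+r)) = pi^2/(6 * r!), where h_n^(r) are hyperharmonic numbers. -/

import Mathlib

open scoped BigOperators

noncomputable def H (n : ℕ) : ℝ := ∑ k ∈ Finset.range n, (1 : ℝ) / (k + 1)

noncomputable def h : ℕ → ℕ → ℝ
  | 0, n => 1 / n
  | r + 1, n => ∑ k ∈ Finset.range n, h r (k + 1)

noncomputable def zeta (m : ℕ) : ℝ := ∑' n : ℕ, (1 : ℝ) / ((n : ℝ) + 1) ^ m

noncomputable def hzeta (m k : ℕ) : ℝ := ∑' j : ℕ, (1 : ℝ) / ((j : ℝ) + k) ^ m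

noncomputable def zetaH (m : ℕ) : ℝ := ∑' n : ℕ, H (n + 1) / ((n : ℝ) + 1) ^ m

def stirling1 : ℕ → ℕ → ℕ
  | 0, 0 => 1
  | 0, _ + 1 => 0
  | _ + 1, 0 => 0
  | n + 1, k + 1 => stirling1 n k + n * stirling1 n (k + 1)


open Finset Filter Topology Real

noncomputable def Qd (r n : ℕ) : ℝ := ∏ i ∈ Finset.range (r+1), ((n:ℝ)+1+i)

lemma Qd_pos (r n : ℕ) : 0 < Qd r n := by
  apply Finset.prod_pos; intro i _; positivity

lemma Qd_succ (r n : ℕ) : Qd (r+1) n = Qd r n * ((n:ℝ)+2+r) := by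
  rw [Qd, prod_range_succ]; rw [Qd]; push_cast; ring

lemma Qd_shift (r n : ℕ) : Qd (r+1) n = ((n:ℝ)+1) * Qd r (n+1) := by
  rw [Qd, prod_range_succ']
  rw [Qd]
  rw [mul_comm]
  congr 1
  · push_cast; ring
  · apply Finset.prod_congr rfl; intro i _; push_cast; ring

lemma h_one_eq_H (n : ℕ) : h 1 n = H n := by
  show (∑ k ∈ Finset.range n, h 0 (k+1)) = H n
  rw [H]
  apply Finset.sum_congr rfl; intro k _
  show 1 / ((k+1 : ℕ) : ℝ) = _
  push_cast; ring

lemma h_nonneg : ∀ r n, 0 ≤ h r n := by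
  intro r
  induction r with
  | zero => intro n; show (0:ℝ) ≤ 1 / n; positivity
  | succ r ih =>
    intro n
    show (0:ℝ) ≤ ∑ k ∈ Finset.range n, h r (k+1)
    exact Finset.sum_nonneg fun k _ => ih _

lemma h_succ_succ (r n : ℕ) : h (r+1) (n+1) = h (r+1) n + h r (n+1) := by
  show (∑ k ∈ Finset.range (n+1), h r (k+1)) = (∑ k ∈ Finset.range n, h r (k+1)) + h r (n+1)
  rw [Finset.sum_range_succ]

lemma h_one (r : ℕ) : h (r+1) 1 = h r 1 := by
  show (∑ k ∈ Finset.range 1, h r (k+1)) = h r 1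
  simp

lemma H_succ (n : ℕ) : H (n+1) = H n + 1/((n:ℝ)+1) := by
  rw [H, H, Finset.sum_range_succ]

lemma H_nonneg (n : ℕ) : 0 ≤ H n := by
  apply Finset.sum_nonneg; intro k _; positivity

lemma H_mono : Monotone H := by
  intro a b hab
  apply Finset.sum_le_sum_of_subset_of_nonneg (Finset.range_subset_range.2 hab)
  intro k _ _; positivity

lemma H_le_sqrt (n : ℕ) : H n ≤ 2 * Real.sqrt n := by
  induction n with
  | zero => simp [H]
  | succ n ih =>
    rw [H_succ]
    have ha : Real.sqrt n ^ 2 = n := Real.sq_sqrt (by positivity)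
    have hb : Real.sqrt ((n:ℝ)+1) ^ 2 = (n:ℝ)+1 := Real.sq_sqrt (by positivity)
    have hab : Real.sqrt n ≤ Real.sqrt ((n:ℝ)+1) := Real.sqrt_le_sqrt (by linarith)
    have hb1 : 1 ≤ Real.sqrt ((n:ℝ)+1) := by
      nlinarith [hb, Real.sqrt_nonneg ((n:ℝ)+1)]
    have ha0 : 0 ≤ Real.sqrt (n:ℝ) := Real.sqrt_nonneg _
    have key : 1/((n:ℝ)+1) ≤ 2 * Real.sqrt ((n:ℝ)+1) - 2 * Real.sqrt n := by
      rw [div_le_iff₀ (by positivity)]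
      nlinarith [mul_nonneg (sub_nonneg.2 hab)
        (show (0:ℝ) ≤ 2 * Real.sqrt ((n:ℝ)+1) ^ 2 - (Real.sqrt n + Real.sqrt ((n:ℝ)+1)) by
          nlinarith)]
    push_cast
    linarith

lemma prod_body_congr {r : ℕ} {f g : ℕ → ℝ} (hfg : ∀ i, f i = g i) :
    ∏ i ∈ Finset.range r, f i = ∏ i ∈ Finset.range r, g i :=
  Finset.prod_congr rfl (fun i _ => hfg i)

lemma cast_prod_shift (n r : ℕ) :
    (∏ i ∈ Finset.range r, (((n+1:ℕ):ℝ)+(i:ℝ))) = ∏ i ∈ Finset.range r, ((n:ℝ)+1+i) :=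
  prod_body_congr (fun i => by push_cast; ring)

lemma hockey (r : ℕ) : ∀ n : ℕ, ∑ k ∈ Finset.range n, ∏ i ∈ Finset.range r, ((k:ℝ)+1+i)
    = (∏ i ∈ Finset.range (r+1), ((n:ℝ)+i)) / (r+1) := by
  intro n
  induction n with
  | zero =>
    simp [Finset.prod_range_succ']
  | succ n ih =>
    rw [Finset.sum_range_succ, ih]
    have e1 : (∏ i ∈ Finset.range (r+1), (((n+1:ℕ):ℝ)+(i:ℝ)))
        = (∏ i ∈ Finset.range r, ((n:ℝ)+1+i)) * ((n:ℝ)+1+r) := by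
      rw [prod_range_succ, cast_prod_shift]
      push_cast; ring
    have e2 : (∏ i ∈ Finset.range (r+1), ((n:ℝ)+(i:ℝ)))
        = (n:ℝ) * ∏ i ∈ Finset.range r, ((n:ℝ)+1+i) := by
      rw [prod_range_succ',
        prod_body_congr (f := fun i => (n:ℝ)+((i+1:ℕ):ℝ)) (g := fun i => (n:ℝ)+1+i)
          (fun i => by push_cast; ring)]
      push_cast; ring
    rw [e2, e1]
    field_simp
    ring

lemma h_bound (r : ℕ) : ∀ n : ℕ, h (r+1) n ≤ H (n+r) * (∏ i ∈ Finset.range r, ((n:ℝ)+i)) / (r.factorial : ℝ) := by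
  induction r with
  | zero => intro n; simp [h_one_eq_H]
  | succ r ih =>
    intro n
    show (∑ k ∈ Finset.range n, h (r+1) (k+1)) ≤ _
    have step : ∀ k ∈ Finset.range n, h (r+1) (k+1)
        ≤ H (n+(r+1)) * (∏ i ∈ Finset.range r, ((k:ℝ)+1+i)) / (r.factorial : ℝ) := by
      intro k hk
      rw [Finset.mem_range] at hk
      refine le_trans (ih (k+1)) ?_
      have hmono : H (k+1+r) ≤ H (n+(r+1)) := H_mono (by omega)
      have hprodnn : 0 ≤ ∏ i ∈ Finset.range r, ((k:ℝ)+1+i) := by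
        apply Finset.prod_nonneg; intro i _; positivity
      rw [cast_prod_shift k r]
      gcongr
    refine le_trans (Finset.sum_le_sum step) ?_
    rw [← Finset.sum_div, ← Finset.mul_sum, hockey r n]
    rw [Nat.factorial_succ]
    push_cast
    apply le_of_eq
    have h1 : ((r:ℝ)+1) ≠ 0 := ne_of_gt (by positivity)
    have h2 : ((r.factorial:ℕ):ℝ) ≠ 0 := ne_of_gt (by positivity)
    field_simp

lemma tail_le (r N : ℕ) : h (r+1) (N+1) / Qd r N ≤ 2 / ((r.factorial : ℝ) * Real.sqrt ((N:ℝ)+1)) := by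
  have hQ : Qd r N = (∏ i ∈ Finset.range r, ((N:ℝ)+1+i)) * ((N:ℝ)+1+r) := by
    rw [Qd, prod_range_succ]
  have h1 : h (r+1) (N+1) ≤ H (N+1+r) * (∏ i ∈ Finset.range r, ((N:ℝ)+1+i)) / (r.factorial : ℝ) := by
    have := h_bound r (N+1); rwa [cast_prod_shift N r] at this
  have hprodpos : 0 < ∏ i ∈ Finset.range r, ((N:ℝ)+1+i) := by
    apply Finset.prod_pos; intro i _; positivity
  have hQpos := Qd_pos r N
  have hH : H (N+1+r) ≤ 2 * Real.sqrt ((N:ℝ)+1+r) := by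
    have := H_le_sqrt (N+1+r); push_cast at this; exact this
  have hs1 : Real.sqrt ((N:ℝ)+1) ≤ Real.sqrt ((N:ℝ)+1+r) := Real.sqrt_le_sqrt (le_add_of_nonneg_right (Nat.cast_nonneg r))
  have hs0 : 0 < Real.sqrt ((N:ℝ)+1) := Real.sqrt_pos.2 (by positivity)
  have hs0' : 0 < Real.sqrt ((N:ℝ)+1+r) := lt_of_lt_of_le hs0 hs1
  have hs2 : Real.sqrt ((N:ℝ)+1+r) ^ 2 = (N:ℝ)+1+r := Real.sq_sqrt (show (0:ℝ) ≤ (N:ℝ)+1+r by positivity)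
  have hf : (0:ℝ) < (r.factorial : ℝ) := by positivity
  calc h (r+1) (N+1) / Qd r N
      ≤ (H (N+1+r) * (∏ i ∈ Finset.range r, ((N:ℝ)+1+i)) / (r.factorial : ℝ)) / Qd r N := by
        gcongr
    _ = H (N+1+r) / ((r.factorial : ℝ) * ((N:ℝ)+1+r)) := by
        rw [hQ]; field_simp
    _ ≤ 2 * Real.sqrt ((N:ℝ)+1+r) / ((r.factorial : ℝ) * ((N:ℝ)+1+r)) := by
        gcongr
    _ = 2 / ((r.factorial : ℝ) * Real.sqrt ((N:ℝ)+1+r)) := by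
        rw [div_eq_div_iff (by positivity) (by positivity)]
        linear_combination (2*(r.factorial:ℝ)) * hs2
    _ ≤ 2 / ((r.factorial : ℝ) * Real.sqrt ((N:ℝ)+1)) := by
        gcongr

lemma sqrt_nat_tendsto : Tendsto (fun N : ℕ => Real.sqrt ((N:ℝ)+1)) atTop atTop := by
  have h1 : Tendsto (fun N:ℕ => ((N:ℝ)+1)) atTop atTop :=
    tendsto_atTop_add_const_right _ 1 tendsto_natCast_atTop_atTop
  have h2 : Tendsto (fun x:ℝ => x ^ (1/2:ℝ)) atTop atTop := tendsto_rpow_atTop (by norm_num)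
  exact (h2.comp h1).congr (fun N => (Real.sqrt_eq_rpow _).symm)

lemma inv_sqrt_tendsto : Tendsto (fun N : ℕ => 1 / Real.sqrt ((N:ℝ)+1)) atTop (nhds 0) := by
  simp only [one_div]
  exact sqrt_nat_tendsto.inv_tendsto_atTop

lemma tail_tendsto (r : ℕ) : Tendsto (fun N : ℕ => h (r+1) (N+1) / Qd r N) atTop (nhds 0) := by
  apply squeeze_zero (fun N => div_nonneg (h_nonneg _ _) (Qd_pos r N).le) (fun N => tail_le r N)
  have heq : (fun N : ℕ => 2 / ((r.factorial : ℝ) * Real.sqrt ((N:ℝ)+1)))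
      = fun N : ℕ => (2 / (r.factorial : ℝ)) * (1 / Real.sqrt ((N:ℝ)+1)) := by
    funext N
    rw [mul_one_div, div_div]
  rw [heq]
  simpa using inv_sqrt_tendsto.const_mul (2 / (r.factorial : ℝ))

noncomputable def Ps (r N : ℕ) : ℝ := ∑ n ∈ Finset.range N, h r (n+1) / Qd r n

lemma step_id (r n : ℕ) : h (r+1) (n+1) / Qd (r+1) n
    = (h r (n+2) / Qd r (n+1) + h (r+1) (n+1) / Qd r n - h (r+1) (n+2) / Qd r (n+1)) / ((r:ℝ)+1) := by
  have hrec : h (r+1) (n+2) = h (r+1) (n+1) + h r (n+2) := h_succ_succ r (n+1)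
  rw [hrec]
  have p0 := (Qd_pos r n).ne'
  have p1 := (Qd_pos r (n+1)).ne'
  have p2 := (Qd_pos (r+1) n).ne'
  have hAB : Qd r n * ((n:ℝ)+2+r) = ((n:ℝ)+1) * Qd r (n+1) := (Qd_succ r n).symm.trans (Qd_shift r n)
  rw [Qd_shift r n]
  have e : h r (n+2)/Qd r (n+1) + h (r+1) (n+1)/Qd r n - (h (r+1) (n+1) + h r (n+2))/Qd r (n+1)
      = h (r+1) (n+1)/Qd r n - h (r+1) (n+1)/Qd r (n+1) := by ring
  rw [e, div_sub_div _ _ p0 p1, div_div, div_eq_div_iff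
    (mul_pos (by positivity : (0:ℝ) < (n:ℝ)+1) (Qd_pos r (n+1))).ne'
    (mul_pos (mul_pos (Qd_pos r n) (Qd_pos r (n+1))) (by positivity : (0:ℝ) < (r:ℝ)+1)).ne']
  linear_combination (h (r+1) (n+1) * Qd r (n+1)) * hAB

lemma Ps_rec (r : ℕ) : ∀ N, Ps (r+1) N = (Ps r (N+1) - h (r+1) (N+1) / Qd r N) / ((r:ℝ)+1) := by
  intro N
  induction N with
  | zero =>
    show (0:ℝ) = (Ps r 1 - h (r+1) 1 / Qd r 0) / ((r:ℝ)+1)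
    rw [Ps]
    rw [Finset.sum_range_one, h_one r]
    simp
  | succ N ih =>
    have expand : Ps (r+1) (N+1) = Ps (r+1) N + h (r+1) (N+1) / Qd (r+1) N := by
      rw [Ps, Ps, Finset.sum_range_succ]
    have hPs : Ps r (N+2) = Ps r (N+1) + h r (N+2) / Qd r (N+1) := by
      rw [Ps, Ps, Finset.sum_range_succ]
    rw [expand, ih, step_id r N, show N+1+1 = N+2 from rfl, hPs]
    ring

lemma Qd_one (n : ℕ) : Qd 1 n = ((n:ℝ)+1) * ((n:ℝ)+2) := by
  rw [Qd, prod_range_succ, prod_range_one]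
  push_cast; ring

lemma Ps_one (N : ℕ) : Ps 1 N = 1 - H (N+1)/((N:ℝ)+1) + ∑ n ∈ Finset.range N, 1/((n:ℝ)+2)^2 := by
  induction N with
  | zero => simp [Ps, H]
  | succ N ih =>
    have expand : Ps 1 (N+1) = Ps 1 N + h 1 (N+1) / Qd 1 N := by
      rw [Ps, Ps, Finset.sum_range_succ]
    rw [expand, ih, h_one_eq_H, Qd_one, Finset.sum_range_succ]
    have hH2 : H (N+2) = H (N+1) + 1/((N:ℝ)+2) := by
      have := H_succ (N+1); push_cast at this ⊢; convert this using 3 <;> push_cast <;> ring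
    push_cast [hH2]
    have h1 : ((N:ℝ)+1) ≠ 0 := by positivity
    have h2 : ((N:ℝ)+2) ≠ 0 := by positivity
    field_simp
    ring

lemma basel_shift : Tendsto (fun N => ∑ n ∈ Finset.range N, 1/((n:ℝ)+2)^2) atTop
    (nhds (Real.pi^2/6 - 1)) := by
  have h0 : HasSum (fun n : ℕ => 1/((n:ℝ))^2) (Real.pi^2/6) := hasSum_zeta_two
  have h2 : HasSum (fun n : ℕ => 1/(((n+2:ℕ)):ℝ)^2) (Real.pi^2/6 - 1) := by
    refine (hasSum_nat_add_iff (f := fun n : ℕ => 1/((n:ℝ))^2) 2).2 ?_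
    have e : Real.pi^2/6 - 1 + ∑ i ∈ Finset.range 2, (fun n : ℕ => 1/((n:ℝ))^2) i = Real.pi^2/6 := by
      rw [Finset.sum_range_succ, Finset.sum_range_one]
      norm_num
    rw [e]; exact h0
  have h3 := h2.tendsto_sum_nat
  apply h3.congr
  intro N
  apply Finset.sum_congr rfl
  intro n _
  push_cast
  ring_nf

lemma Ps_one_tendsto : Tendsto (fun N => Ps 1 N) atTop (nhds (Real.pi^2/6)) := by
  have htail : Tendsto (fun N : ℕ => H (N+1)/((N:ℝ)+1)) atTop (nhds 0) := by
    have := tail_tendsto 0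
    apply this.congr
    intro N
    rw [h_one_eq_H, Qd]
    norm_num
  have hcomb := ((tendsto_const_nhds (x := (1:ℝ)) (f := atTop)).sub htail).add basel_shift
  have : (1:ℝ) - 0 + (Real.pi^2/6 - 1) = Real.pi^2/6 := by ring
  rw [this] at hcomb
  apply hcomb.congr
  intro N
  rw [Ps_one]

lemma Ps_tendsto : ∀ r, 1 ≤ r →
    Tendsto (fun N => Ps r N) atTop (nhds (Real.pi^2/(6 * (r.factorial : ℝ)))) := by
  intro r hr
  induction r, hr using Nat.le_induction with
  | base =>
    have : Real.pi^2/(6 * ((Nat.factorial 1 : ℕ) : ℝ)) = Real.pi^2/6 := by norm_num [Nat.factorial]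
    rw [this]
    exact Ps_one_tendsto
  | succ r hr ih =>
    have hcomp : Tendsto (fun N => Ps r (N+1)) atTop (nhds (Real.pi^2/(6 * (r.factorial : ℝ)))) :=
      ih.comp (tendsto_add_atTop_nat 1)
    have hmain := (hcomp.sub (tail_tendsto r)).div_const ((r:ℝ)+1)
    have heq : (Real.pi^2/(6 * (r.factorial : ℝ)) - 0) / ((r:ℝ)+1)
        = Real.pi^2/(6 * (((r+1).factorial : ℕ) : ℝ)) := by
      rw [Nat.factorial_succ]
      push_cast
      have h1 : ((r:ℝ)+1) ≠ 0 := by positivity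
      have h2 : ((r.factorial:ℕ):ℝ) ≠ 0 := by positivity
      field_simp
      ring
    rw [heq] at hmain
    apply hmain.congr
    intro N
    rw [Ps_rec r N]

theorem stmt16 (r : ℕ) (hr : 1 ≤ r) :
    ∑' n : ℕ, h r (n + 1) / ∏ i ∈ Finset.range (r + 1), ((n : ℝ) + 1 + i) =
      Real.pi ^ 2 / (6 * (r.factorial : ℝ)) := by
  set f : ℕ → ℝ := fun n => h r (n+1) / Qd r n with hf
  have htend : Tendsto (fun N => ∑ i ∈ Finset.range N, f i) atTop
      (nhds (Real.pi^2/(6 * (r.factorial : ℝ)))) := Ps_tendsto r hr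
  have hnn : ∀ n, 0 ≤ f n := fun n => div_nonneg (h_nonneg _ _) (Qd_pos r n).le
  have hmon : Monotone (fun N => ∑ i ∈ Finset.range N, f i) := by
    apply monotone_nat_of_le_succ
    intro N
    rw [Finset.sum_range_succ]
    exact le_add_of_nonneg_right (hnn N)
  have hb : ∀ N, ∑ i ∈ Finset.range N, f i ≤ Real.pi^2/(6 * (r.factorial : ℝ)) :=
    hmon.ge_of_tendsto htend
  have hsummable : Summable f := summable_of_sum_range_le hnn hb
  have hhs : HasSum f (Real.pi^2/(6 * (r.factorial : ℝ))) :=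
    (hsummable.hasSum_iff_tendsto_nat).2 htend
  exact hhs.tsum_eq
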